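/- Jacobi triple product specialization: the theta function of the shifted lattice satisfies t^{2/24} · (Σ_{r∈ℤ} t^{2r² − r}) / ∏_{m≥1}(1−t^m) = (t^{1/24} ∏_{m≥1}(1+t^m))², as an identity of formal power series in t (with fractional prefactors tracked formally). -/

import Mathlib

open Finset Filter Real Topology

section Framework
variable {t : ℝ}

lemma jtp_abs_log_le (h0 : 0 < t) (h1 : t < 1) {x : ℝ} (hx : |x| ≤ t) :
    |Real.log (1 + x)| ≤ |x| / (1 - t) := by
  have h1t : 0 < 1 - t := by linarith
  have hx1 : -t ≤ x ∧ x ≤ t := abs_le.mp hx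
  have hpos : 0 < 1 + x := by linarith [hx1.1]
  rcases le_or_gt 0 x with hx0 | hx0
  · have hlog0 : 0 ≤ Real.log (1 + x) := Real.log_nonneg (by linarith)
    rw [abs_of_nonneg hlog0, abs_of_nonneg hx0]
    have := Real.log_le_sub_one_of_pos hpos
    have hxx : x ≤ x / (1 - t) := by
      rw [le_div_iff₀ h1t]; nlinarith
    linarith
  · have hlog0 : Real.log (1 + x) ≤ 0 := Real.log_nonpos (by linarith [hx1.1]) (by linarith)
    rw [abs_of_nonpos hlog0, abs_of_neg hx0]
    have hinv : Real.log (1 + x) = - Real.log (1 + x)⁻¹ := by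
      rw [Real.log_inv]; ring
    have h2 : Real.log (1 + x)⁻¹ ≤ (1 + x)⁻¹ - 1 := Real.log_le_sub_one_of_pos (by positivity)
    have h3 : (1 + x)⁻¹ - 1 = -x / (1 + x) := by field_simp; ring
    have h4 : -x / (1 + x) ≤ -x / (1 - t) := by
      apply div_le_div_of_nonneg_left (by linarith) h1t (by linarith [hx1.1])
    rw [hinv]; linarith [h2.trans (h3.le.trans (le_of_eq rfl)), h4]

variable (h0 : 0 < t) (h1 : t < 1) {g : ℕ → ℝ} (hg : ∀ n, |g n - 1| ≤ t ^ (n + 1))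
include h0 h1 hg

lemma jtp_pos (n : ℕ) : 0 < g n := by
  have h1' : t ^ (n+1) ≤ t := pow_le_of_le_one h0.le h1.le (Nat.succ_ne_zero n)
  have := abs_le.mp (hg n)
  linarith [this.1]

lemma jtp_log_summable : Summable fun n => Real.log (g n) := by
  have h1t : 0 < 1 - t := by linarith
  apply Summable.of_norm_bounded (g := fun n => t ^ (n+1) / (1 - t))
  · exact (((summable_geometric_of_lt_one h0.le h1).mul_left t).congr
      (fun n => by rw [pow_succ]; ring)).div_const _
  · intro n
    have h1' : t ^ (n+1) ≤ t := pow_le_of_le_one h0.le h1.le (Nat.succ_ne_zero n)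
    have habs : |g n - 1| ≤ t := (hg n).trans h1'
    have := jtp_abs_log_le h0 h1 habs
    have heq : 1 + (g n - 1) = g n := by ring
    rw [heq] at this
    refine this.trans ?_
    gcongr
    exact hg n

end Framework

section F2
variable {t : ℝ}
variable (h0 : 0 < t) (h1 : t < 1) {g : ℕ → ℝ} (hg : ∀ n, |g n - 1| ≤ t ^ (n + 1))
include h0 h1 hg

lemma jtp_hasProd : HasProd g (Real.exp (∑' n, Real.log (g n))) := by
  have h := ((jtp_log_summable h0 h1 hg).hasSum).rexp
  have hfe : (Real.exp ∘ fun n => Real.log (g n)) = g :=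
    funext fun n => Real.exp_log (jtp_pos h0 h1 hg n)
  rwa [hfe] at h

lemma jtp_tprod_eq : ∏' n, g n = Real.exp (∑' n, Real.log (g n)) :=
  (jtp_hasProd h0 h1 hg).tprod_eq

lemma jtp_multipliable : Multipliable g := (jtp_hasProd h0 h1 hg).multipliable

lemma jtp_tprod_pos : 0 < ∏' n, g n := by
  rw [jtp_tprod_eq h0 h1 hg]; exact Real.exp_pos _

lemma jtp_tendsto_prod : Tendsto (fun N => ∏ n ∈ range N, g n) atTop (𝓝 (∏' n, g n)) := by
  rw [jtp_tprod_eq h0 h1 hg]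
  have h := ((jtp_log_summable h0 h1 hg).hasSum.tendsto_sum_nat).rexp
  refine h.congr fun N => ?_
  rw [Real.exp_sum]
  exact Finset.prod_congr rfl fun n _ => Real.exp_log (jtp_pos h0 h1 hg n)
end F2

section F3
variable {t : ℝ} (h0 : 0 < t) (h1 : t < 1)
include h0 h1

lemma jtp_hyp {s : ℝ} (hs : |s| ≤ 1) {e : ℕ → ℕ} (he : ∀ n, n + 1 ≤ e n) :
    ∀ n, |(1 + s * t ^ e n) - 1| ≤ t ^ (n + 1) := by
  intro n
  have : |(1 + s * t ^ e n) - 1| = |s| * t ^ e n := by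
    rw [add_sub_cancel_left, abs_mul, abs_of_nonneg (by positivity : (0:ℝ) ≤ t ^ e n)]
  rw [this]
  calc |s| * t ^ e n ≤ 1 * t ^ e n := by gcongr
    _ = t ^ e n := one_mul _
    _ ≤ t ^ (n+1) := pow_le_pow_of_le_one h0.le h1.le (he n)

-- rearrangement: ∏(1±t^{e n}) with plus and minus multiply to ∏(1 - t^{2 e n})
lemma jtp_pair {e : ℕ → ℕ} (he : ∀ n, n + 1 ≤ e n) :
    (∏' n, (1 - t ^ e n)) * (∏' n, (1 + t ^ e n)) = ∏' n, (1 - t ^ (2 * e n)) := by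
  have hm : ∀ n, |(1 - t ^ e n) - 1| ≤ t ^ (n+1) := by
    have := jtp_hyp h0 h1 (s := -1) (by norm_num) he
    simpa [neg_mul, sub_eq_add_neg] using this
  have hp : ∀ n, |(1 + t ^ e n) - 1| ≤ t ^ (n+1) := by
    have := jtp_hyp h0 h1 (s := 1) (by norm_num) he
    simpa using this
  have h2 : ∀ n, |(1 - t ^ (2 * e n)) - 1| ≤ t ^ (n+1) := by
    have := jtp_hyp h0 h1 (s := -1) (by norm_num) (e := fun n => 2 * e n)
      (fun n => by have := he n; show n + 1 ≤ 2 * e n; omega)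
    simpa [neg_mul, sub_eq_add_neg] using this
  rw [jtp_tprod_eq h0 h1 hm, jtp_tprod_eq h0 h1 hp, jtp_tprod_eq h0 h1 h2, ← Real.exp_add,
    ← Summable.tsum_add (jtp_log_summable h0 h1 hm) (jtp_log_summable h0 h1 hp)]
  congr 1
  apply tsum_congr
  intro n
  rw [← Real.log_mul (ne_of_gt (jtp_pos h0 h1 hm n)) (ne_of_gt (jtp_pos h0 h1 hp n))]
  congr 1
  have : t ^ (2 * e n) = t ^ e n * t ^ e n := by rw [two_mul, pow_add]
  rw [this]; ring

end F3

section F4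
variable {t : ℝ} (h0 : 0 < t) (h1 : t < 1)
include h0 h1

lemma jtp_hyp_plus {e : ℕ → ℕ} (he : ∀ n, n + 1 ≤ e n) :
    ∀ n, |(1 + t ^ e n) - 1| ≤ t ^ (n + 1) := by
  have := jtp_hyp h0 h1 (s := 1) (by norm_num) he
  simpa using this

lemma jtp_hyp_minus {e : ℕ → ℕ} (he : ∀ n, n + 1 ≤ e n) :
    ∀ n, |(1 - t ^ e n) - 1| ≤ t ^ (n + 1) := by
  have := jtp_hyp h0 h1 (s := -1) (by norm_num) he
  simpa [neg_mul, sub_eq_add_neg] using this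

lemma jtp_rearrange :
    (∏' m : ℕ, (1 - t ^ (m + 1))) * (∏' m : ℕ, (1 + t ^ (m + 1))) ^ 2
      = (∏' m : ℕ, (1 - t ^ (4 * (m + 1)))) * ∏' m : ℕ, (1 + t ^ (2 * m + 1)) := by
  have hB : ∏' m : ℕ, (1 + t ^ (m + 1))
      = (∏' k : ℕ, (1 + t ^ (2 * k + 1))) * ∏' k : ℕ, (1 + t ^ (2 * (k + 1))) := by
    rw [← tprod_even_mul_odd (f := fun m => 1 + t ^ (m + 1))
      (jtp_multipliable h0 h1 (jtp_hyp_plus h0 h1 (e := fun k => 2 * k + 1) (fun n => by show n+1 ≤ 2*n+1; omega)))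
      (jtp_multipliable h0 h1 (jtp_hyp_plus h0 h1 (e := fun k => 2 * k + 1 + 1) (fun n => by show n+1 ≤ 2*n+1+1; omega)))]
    refine congrArg₂ (· * ·) ?_ ?_
    · exact tprod_congr fun k => rfl
    · exact tprod_congr fun k => by ring_nf
  have hp1 : (∏' n : ℕ, (1 - t ^ (n + 1))) * ∏' n : ℕ, (1 + t ^ (n + 1))
      = ∏' n : ℕ, (1 - t ^ (2 * (n + 1))) :=
    jtp_pair h0 h1 (e := fun m => m + 1) (fun n => le_rfl)
  have hp2 : (∏' n : ℕ, (1 - t ^ (2 * (n + 1)))) * ∏' n : ℕ, (1 + t ^ (2 * (n + 1)))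
      = ∏' n : ℕ, (1 - t ^ (2 * (2 * (n + 1)))) :=
    jtp_pair h0 h1 (e := fun m => 2 * (m + 1)) (fun n => by show n+1 ≤ 2*(n+1); omega)
  have key : (∏' m : ℕ, (1 - t ^ (m + 1))) * (∏' m : ℕ, (1 + t ^ (m + 1))) ^ 2
      = (∏' m : ℕ, (1 - t ^ (2 * (2 * (m + 1))))) * ∏' k : ℕ, (1 + t ^ (2 * k + 1)) := by
    rw [pow_two, ← mul_assoc, hp1, hB, ← mul_assoc, mul_comm _ (∏' k : ℕ, (1 + t ^ (2 * k + 1))),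
      mul_assoc, hp2, mul_comm]
  rw [key]
  refine congrArg₂ (· * ·) (tprod_congr fun m => ?_) rfl
  congr 2
  omega

end F4

noncomputable section Gauss

def jtpNum (t : ℝ) (N k : ℕ) : ℝ := ∏ j ∈ range k, (1 - t ^ (4 * (N - j)))
def jtpDen (t : ℝ) (k : ℕ) : ℝ := ∏ j ∈ range k, (1 - t ^ (4 * (j + 1)))
def jtpB (t : ℝ) (N k : ℕ) : ℝ := jtpNum t N k / jtpDen t k

variable {t : ℝ} (h0 : 0 < t) (h1 : t < 1)

lemma jtp_pow_le_one {e : ℕ} (h0 : 0 < t) (h1 : t < 1) : t ^ e ≤ 1 :=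
  pow_le_one₀ h0.le h1.le

lemma jtp_pow_lt_one {e : ℕ} (h0 : 0 < t) (h1 : t < 1) (he : e ≠ 0) : t ^ e < 1 :=
  pow_lt_one₀ h0.le h1 he

include h0 h1

lemma jtpDen_pos (k : ℕ) : 0 < jtpDen t k := by
  apply Finset.prod_pos
  intro j _
  have := jtp_pow_lt_one h0 h1 (e := 4 * (j + 1)) (by omega)
  linarith

lemma jtpNum_nonneg (N k : ℕ) : 0 ≤ jtpNum t N k := by
  apply Finset.prod_nonneg
  intro j _
  have := jtp_pow_le_one (e := 4 * (N - j)) h0 h1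
  linarith

lemma jtpNum_le_one (N k : ℕ) : jtpNum t N k ≤ 1 := by
  apply Finset.prod_le_one
  · intro j _
    have := jtp_pow_le_one (e := 4 * (N - j)) h0 h1
    linarith
  · intro j _
    have : 0 < t ^ (4 * (N - j)) := by positivity
    linarith

lemma jtpB_nonneg (N k : ℕ) : 0 ≤ jtpB t N k :=
  div_nonneg (jtpNum_nonneg h0 h1 N k) (jtpDen_pos h0 h1 k).le

lemma jtpB_le (N k : ℕ) : jtpB t N k ≤ (jtpDen t k)⁻¹ := by
  rw [jtpB, div_eq_mul_inv]
  nth_rewrite 2 [← one_mul (jtpDen t k)⁻¹]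
  exact mul_le_mul_of_nonneg_right (jtpNum_le_one h0 h1 N k) (inv_nonneg.mpr (jtpDen_pos h0 h1 k).le)

omit h0 h1

lemma jtpNum_succ (N k : ℕ) :
    jtpNum t N (k + 1) = jtpNum t N k * (1 - t ^ (4 * (N - k))) := prod_range_succ _ _

lemma jtpDen_succ (k : ℕ) :
    jtpDen t (k + 1) = jtpDen t k * (1 - t ^ (4 * (k + 1))) := prod_range_succ _ _

lemma jtpNum_shift (N k : ℕ) :
    jtpNum t (N + 1) (k + 1) = (1 - t ^ (4 * (N + 1))) * jtpNum t N k := by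
  rw [jtpNum, prod_range_succ', mul_comm]
  congr 1
  apply Finset.prod_congr rfl
  intro j _
  congr 2
  omega

lemma jtpNum_top (N : ℕ) : jtpNum t N (N + 1) = 0 := by
  rw [jtpNum]
  apply Finset.prod_eq_zero (Finset.self_mem_range_succ N)
  simp

lemma jtpB_zero (N : ℕ) : jtpB t N 0 = 1 := by simp [jtpB, jtpNum, jtpDen]

lemma jtpB_top (N : ℕ) : jtpB t N (N + 1) = 0 := by rw [jtpB, jtpNum_top, zero_div]

include h0 h1

lemma jtp_pascal (N k : ℕ) (hk : k ≤ N) :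
    jtpB t (N + 1) (k + 1) = jtpB t N (k + 1) + t ^ (4 * (N - k)) * jtpB t N k := by
  have hden : jtpDen t k ≠ 0 := (jtpDen_pos h0 h1 k).ne'
  have hfac : (1 : ℝ) - t ^ (4 * (k + 1)) ≠ 0 := by
    have := jtp_pow_lt_one h0 h1 (e := 4 * (k + 1)) (by omega)
    intro h; linarith [sub_eq_zero.mp h]
  have hpow : t ^ (4 * (N - k)) * t ^ (4 * (k + 1)) = t ^ (4 * (N + 1)) := by
    rw [← pow_add]; congr 1; omega
  rw [jtpB, jtpB, jtpB, jtpNum_shift, jtpNum_succ, jtpDen_succ, ← hpow]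
  field_simp
  ring

end Gauss

section QBinom
variable {t : ℝ} (h0 : 0 < t) (h1 : t < 1)
include h0 h1

lemma jtp_qbinom (u : ℝ) (N : ℕ) :
    ∏ j ∈ range N, (1 + u * t ^ (4 * j))
      = ∑ k ∈ range (N + 1), t ^ (2 * (k * (k - 1))) * jtpB t N k * u ^ k := by
  induction N with
  | zero => simp [jtpB_zero]
  | succ N ih =>
    rw [prod_range_succ, ih, Finset.sum_range_succ'
      (fun k => t ^ (2 * (k * (k - 1))) * jtpB t (N + 1) k * u ^ k) (N + 1)]
    have hzero : t ^ (2 * (0 * (0 - 1))) * jtpB t (N + 1) 0 * u ^ 0 = 1 := by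
      simp [jtpB_zero]
    rw [hzero]
    -- LHS expansion
    have hexp : (∑ k ∈ range (N + 1), t ^ (2 * (k * (k - 1))) * jtpB t N k * u ^ k)
          * (1 + u * t ^ (4 * N))
        = (∑ k ∈ range (N + 1), t ^ (2 * (k * (k - 1))) * jtpB t N k * u ^ k)
          + ∑ k ∈ range (N + 1), t ^ (4 * N) * (t ^ (2 * (k * (k - 1))) * jtpB t N k) * u ^ (k + 1) := by
      rw [mul_add, mul_one, Finset.sum_mul]
      congr 1
      apply Finset.sum_congr rfl
      intro k _
      ring
    rw [hexp]
    -- rewrite first sum via sum_range_succ'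
    rw [Finset.sum_range_succ' (fun k => t ^ (2 * (k * (k - 1))) * jtpB t N k * u ^ k) N]
    have hzero' : t ^ (2 * (0 * (0 - 1))) * jtpB t N 0 * u ^ 0 = 1 := by simp [jtpB_zero]
    rw [hzero']
    -- extend range N to range (N+1) using jtpB_top
    have hext : ∑ k ∈ range N, t ^ (2 * ((k+1) * (k+1-1))) * jtpB t N (k+1) * u ^ (k+1)
        = ∑ k ∈ range (N+1), t ^ (2 * ((k+1) * (k+1-1))) * jtpB t N (k+1) * u ^ (k+1) := by
      rw [Finset.sum_range_succ, jtpB_top]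
      ring
    rw [hext, add_right_comm, ← Finset.sum_add_distrib]
    congr 1
    symm
    apply Finset.sum_congr rfl
    intro k hk
    have hkN : k ≤ N := by simpa using Nat.lt_succ_iff.mp (Finset.mem_range.mp hk)
    have hpascal := jtp_pascal h0 h1 N k hkN
    have hpow : t ^ (4 * N) * t ^ (2 * (k * (k - 1))) = t ^ (2 * ((k+1) * (k+1-1))) * t ^ (4 * (N - k)) := by
      rw [← pow_add, ← pow_add]
      congr 1
      cases k with
      | zero => omega
      | succ k => simp only [Nat.add_sub_cancel]; ring_nf; omega
    calc t ^ (2 * ((k+1) * (k+1-1))) * jtpB t (N+1) (k+1) * u ^ (k+1)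
        = t ^ (2 * ((k+1) * (k+1-1))) * (jtpB t N (k+1) + t ^ (4 * (N - k)) * jtpB t N k) * u ^ (k+1) := by
          rw [hpascal]
      _ = t ^ (2 * ((k+1) * (k+1-1))) * jtpB t N (k+1) * u ^ (k+1)
          + t ^ (2 * ((k+1) * (k+1-1))) * t ^ (4 * (N - k)) * jtpB t N k * u ^ (k+1) := by ring
      _ = t ^ (2 * ((k+1) * (k+1-1))) * jtpB t N (k+1) * u ^ (k+1)
          + t ^ (4 * N) * (t ^ (2 * (k * (k - 1))) * jtpB t N k) * u ^ (k+1) := by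
          rw [← hpow]; ring
end QBinom

section Finite
variable {t : ℝ} (h0 : 0 < t) (h1 : t < 1)

lemma jtp_prod_even_odd (g : ℕ → ℝ) (N : ℕ) :
    ∏ j ∈ range (2 * N), g j = (∏ i ∈ range N, g (2 * i)) * ∏ i ∈ range N, g (2 * i + 1) := by
  induction N with
  | zero => simp
  | succ N ih =>
    have h2 : 2 * (N + 1) = (2 * N) + 1 + 1 := by ring
    rw [h2, prod_range_succ, prod_range_succ, ih, prod_range_succ, prod_range_succ]
    ring

lemma jtp_zpow_sum (ht : t ≠ 0) (f : ℕ → ℤ) (N : ℕ) :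
    t ^ (∑ j ∈ range N, f j) = ∏ j ∈ range N, t ^ (f j) := by
  induction N with
  | zero => simp
  | succ N ih => rw [sum_range_succ, prod_range_succ, zpow_add₀ ht, ih]

lemma jtp_sum_A (N : ℕ) : (∑ j ∈ range N, (4 * (j : ℤ) + 3)) = 2 * (N : ℤ) ^ 2 + N := by
  induction N with
  | zero => simp
  | succ N ih => rw [sum_range_succ, ih]; push_cast; ring

include h0 h1

lemma jtp_finite (N : ℕ) :
    ∏ j ∈ range (2 * N), (1 + t ^ (2 * j + 1))
      = ∑ k ∈ range (2 * N + 1), jtpB t (2 * N) k * t ^ (2 * ((k : ℤ) - N) ^ 2 - ((k : ℤ) - N)) := by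
  have ht : t ≠ 0 := h0.ne'
  have key := jtp_qbinom h0 h1 (t ^ ((1 : ℤ) - 4 * N)) (2 * N)
  have key2 := congrArg (fun x => t ^ (2 * (N : ℤ) ^ 2 + N) * x) key
  -- transform LHS of key2
  have hL : t ^ (2 * (N : ℤ) ^ 2 + N) * ∏ j ∈ range (2 * N), (1 + t ^ ((1 : ℤ) - 4 * N) * t ^ (4 * j))
      = ∏ j ∈ range (2 * N), (1 + t ^ (2 * j + 1)) := by
    have hsplit : ∏ j ∈ range (2 * N), (1 + t ^ ((1 : ℤ) - 4 * N) * t ^ (4 * j))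
        = (∏ j ∈ range N, (1 + t ^ ((1 : ℤ) - 4 * N) * t ^ (4 * j)))
          * ∏ j ∈ range N, (1 + t ^ ((1 : ℤ) - 4 * N) * t ^ (4 * (N + j))) := by
      rw [two_mul, prod_range_add]
    have hA : t ^ (2 * (N : ℤ) ^ 2 + N) = ∏ j ∈ range N, t ^ (4 * (j : ℤ) + 3) := by
      rw [← jtp_sum_A, jtp_zpow_sum ht]
    -- first half, reflected
    have hrefl : ∏ j ∈ range N, (1 + t ^ ((1 : ℤ) - 4 * N) * t ^ (4 * j))
        = ∏ j ∈ range N, (1 + t ^ (-(4 * (j : ℤ) + 3))) := by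
      rw [← prod_range_reflect]
      apply Finset.prod_congr rfl
      intro j hj
      have hj' : j < N := Finset.mem_range.mp hj
      congr 1
      rw [← zpow_natCast t (4 * (N - 1 - j)), ← zpow_add₀ ht]
      congr 1
      have : (((4 * (N - 1 - j) : ℕ)) : ℤ) = 4 * ((N : ℤ) - 1 - j) := by
        push_cast [Nat.cast_sub (by omega : 1 + j ≤ N)]; ring_nf; omega
      rw [this]; ring
    have hsecond : ∏ j ∈ range N, (1 + t ^ ((1 : ℤ) - 4 * N) * t ^ (4 * (N + j)))
        = ∏ j ∈ range N, (1 + t ^ (4 * j + 1)) := by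
      apply Finset.prod_congr rfl
      intro j _
      congr 1
      rw [← zpow_natCast t (4 * (N + j)), ← zpow_add₀ ht, ← zpow_natCast t (4 * j + 1)]
      congr 1
      push_cast; ring
    have hfirst : (∏ j ∈ range N, t ^ (4 * (j : ℤ) + 3)) * ∏ j ∈ range N, (1 + t ^ (-(4 * (j : ℤ) + 3)))
        = ∏ j ∈ range N, (1 + t ^ (4 * j + 3)) := by
      rw [← prod_mul_distrib]
      apply Finset.prod_congr rfl
      intro j _
      rw [mul_add, mul_one, ← zpow_add₀ ht]
      simp only [add_neg_cancel, zpow_zero]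
      rw [← zpow_natCast t (4 * j + 3)]
      push_cast
      ring
    rw [hsplit, hA, ← mul_assoc, hrefl, hfirst, hsecond,
      jtp_prod_even_odd (fun j => 1 + t ^ (2 * j + 1)) N]
    rw [mul_comm]
    congr 1
    · apply Finset.prod_congr rfl; intro j _; congr 2; omega
    · apply Finset.prod_congr rfl; intro j _; congr 2; omega
  -- transform RHS of key2
  have hR : t ^ (2 * (N : ℤ) ^ 2 + N)
        * ∑ k ∈ range (2 * N + 1), t ^ (2 * (k * (k - 1))) * jtpB t (2 * N) k * (t ^ ((1 : ℤ) - 4 * N)) ^ k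
      = ∑ k ∈ range (2 * N + 1), jtpB t (2 * N) k * t ^ (2 * ((k : ℤ) - N) ^ 2 - ((k : ℤ) - N)) := by
    rw [Finset.mul_sum]
    apply Finset.sum_congr rfl
    intro k _
    have hcast : ((2 * (k * (k - 1)) : ℕ) : ℤ) = 2 * (k : ℤ) ^ 2 - 2 * k := by
      cases k with
      | zero => simp
      | succ k => push_cast [Nat.add_sub_cancel]; ring
    rw [← zpow_natCast (t ^ ((1 : ℤ) - 4 * N)) k, ← zpow_mul, ← zpow_natCast t (2 * (k * (k - 1)))]
    rw [show (t : ℝ) ^ (2 * (N : ℤ) ^ 2 + N) * (t ^ (((2 * (k * (k - 1)) : ℕ) : ℤ)) * jtpB t (2 * N) k * t ^ (((1 : ℤ) - 4 * N) * k))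
        = jtpB t (2 * N) k * (t ^ (2 * (N : ℤ) ^ 2 + N) * t ^ (((2 * (k * (k - 1)) : ℕ) : ℤ)) * t ^ (((1 : ℤ) - 4 * N) * k)) from by ring]
    congr 1
    rw [← zpow_add₀ ht, ← zpow_add₀ ht]
    congr 1
    rw [hcast]
    ring
  rw [← hL, key2, hR]

end Finite

section Limits
variable {t : ℝ} (h0 : 0 < t) (h1 : t < 1)

lemma jtp_prod_one_sub_ge (a : ℕ → ℝ) (h : ∀ j, 0 ≤ a j ∧ a j ≤ 1) (k : ℕ) :
    1 - ∑ j ∈ range k, a j ≤ ∏ j ∈ range k, (1 - a j) := by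
  induction k with
  | zero => simp
  | succ k ih =>
    rw [sum_range_succ, prod_range_succ]
    have h1 : 0 ≤ 1 - a k := by linarith [(h k).2]
    have h2 : (1 - ∑ j ∈ range k, a j) * (1 - a k) ≤ (∏ j ∈ range k, (1 - a j)) * (1 - a k) :=
      mul_le_mul_of_nonneg_right ih h1
    have h3 : 0 ≤ ∑ j ∈ range k, a j := Finset.sum_nonneg fun j _ => (h j).1
    nlinarith [(h k).1]

include h0 h1

lemma jtp_summable_S : Summable (fun r : ℤ => t ^ (2 * r ^ 2 - r)) := by
  have ht : t ≠ 0 := h0.ne'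
  have key : ∀ (r : ℤ), (r : ℤ) ≤ 2 * r ^ 2 - r → t ^ (2 * r ^ 2 - r) ≤ t ^ r := fun r hr =>
    zpow_le_zpow_right_of_le_one₀ h0 h1.le hr
  apply Summable.of_nat_of_neg_add_one
  · apply Summable.of_nonneg_of_le (fun n => by positivity) (f := fun n : ℕ => t ^ n)
    · intro n
      have h1' : ((n : ℤ)) ≤ 2 * (n : ℤ) ^ 2 - n := by nlinarith [sq_nonneg ((n : ℤ) - 1)]
      have := key n h1'
      rwa [zpow_natCast] at this
    · exact summable_geometric_of_lt_one h0.le h1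
  · apply Summable.of_nonneg_of_le (fun n => by positivity) (f := fun n : ℕ => t ^ n)
    · intro n
      have hle : ((n : ℤ)) ≤ 2 * (-((n : ℤ) + 1)) ^ 2 - (-((n : ℤ) + 1)) := by nlinarith [sq_nonneg ((n : ℤ))]
      have h2 := zpow_le_zpow_right_of_le_one₀ h0 h1.le hle
      rwa [zpow_natCast] at h2
    · exact summable_geometric_of_lt_one h0.le h1

-- D ≤ partial products of Den
lemma jtp_tprod_le_partial {g : ℕ → ℝ} (hg : ∀ n, |g n - 1| ≤ t ^ (n + 1))
    (hle : ∀ n, g n ≤ 1) (k : ℕ) : ∏' n, g n ≤ ∏ n ∈ range k, g n := by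
  have hsum := jtp_log_summable h0 h1 hg
  have hlog : ∀ n, Real.log (g n) ≤ 0 := fun n =>
    Real.log_nonpos (jtp_pos h0 h1 hg n).le (hle n)
  have h2 : ∑ n ∈ range k, -Real.log (g n) ≤ ∑' n, -Real.log (g n) :=
    Summable.sum_le_tsum _ (fun n _ => by linarith [hlog n]) hsum.neg
  rw [tsum_neg] at h2
  have h3 : ∑' n, Real.log (g n) ≤ ∑ n ∈ range k, Real.log (g n) := by
    have := Finset.sum_neg_distrib (s := range k) (f := fun n => Real.log (g n))
    linarith [h2, this]
  rw [jtp_tprod_eq h0 h1 hg]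
  calc Real.exp (∑' n, Real.log (g n)) ≤ Real.exp (∑ n ∈ range k, Real.log (g n)) :=
        Real.exp_le_exp.mpr h3
    _ = ∏ n ∈ range k, g n := by
        rw [Real.exp_sum]
        exact Finset.prod_congr rfl fun n _ => Real.exp_log (jtp_pos h0 h1 hg n)

end Limits

section Main
variable {t : ℝ} (h0 : 0 < t) (h1 : t < 1)
include h0 h1

lemma jtp_S_eq :
    (∑' r : ℤ, t ^ (2 * r ^ 2 - r))
      = (∏' m : ℕ, (1 - t ^ (4 * (m + 1)))) * ∏' m : ℕ, (1 + t ^ (2 * m + 1)) := by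
  have ht : t ≠ 0 := h0.ne'
  have hg_den : ∀ n : ℕ, |(1 - t ^ (4 * (n + 1))) - 1| ≤ t ^ (n + 1) :=
    jtp_hyp_minus h0 h1 (e := fun n => 4 * (n + 1)) (fun n => by show n + 1 ≤ 4 * (n + 1); omega)
  have hg_odd : ∀ n : ℕ, |(1 + t ^ (2 * n + 1)) - 1| ≤ t ^ (n + 1) :=
    jtp_hyp_plus h0 h1 (e := fun n => 2 * n + 1) (fun n => by show n + 1 ≤ 2 * n + 1; omega)
  set D := ∏' m : ℕ, (1 - t ^ (4 * (m + 1))) with hD_def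
  set Podd := ∏' m : ℕ, (1 + t ^ (2 * m + 1)) with hPodd_def
  have hD_pos : 0 < D := jtp_tprod_pos h0 h1 hg_den
  have hDen_tendsto : Tendsto (fun k => jtpDen t k) atTop (𝓝 D) := jtp_tendsto_prod h0 h1 hg_den
  have hD_le_den : ∀ k, D ≤ jtpDen t k := fun k =>
    jtp_tprod_le_partial h0 h1 hg_den
      (fun n => by nlinarith [pow_pos h0 (4 * (n + 1))]) k
  have hB_le : ∀ N k, jtpB t N k ≤ D⁻¹ := fun N k =>
    (jtpB_le h0 h1 N k).trans (inv_anti₀ hD_pos (hD_le_den k))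
  set F : ℕ → ℤ → ℝ := fun N r =>
    if r.natAbs ≤ N then jtpB t (2 * N) ((r + N).toNat) * t ^ (2 * r ^ 2 - r) else 0 with hF_def
  have hzpow_pos : ∀ r : ℤ, (0:ℝ) < t ^ (2 * r ^ 2 - r) := fun r => zpow_pos h0 _
  -- bound
  have h_bound : ∀ N r, ‖F N r‖ ≤ D⁻¹ * t ^ (2 * r ^ 2 - r) := by
    intro N r
    rw [hF_def]
    by_cases h : r.natAbs ≤ N
    · simp only [if_pos h]
      rw [Real.norm_eq_abs, abs_of_nonneg (mul_nonneg (jtpB_nonneg h0 h1 _ _) (hzpow_pos r).le)]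
      exact mul_le_mul_of_nonneg_right (hB_le _ _) (hzpow_pos r).le
    · simp only [if_neg h, norm_zero]
      positivity
  -- pointwise limit
  have hab : ∀ r : ℤ, Tendsto (fun N => F N r) atTop (𝓝 (D⁻¹ * t ^ (2 * r ^ 2 - r))) := by
    intro r
    set c := r.natAbs with hc
    -- toNat tendsto
    have htoNat : Tendsto (fun N : ℕ => (r + N).toNat) atTop atTop :=
      tendsto_atTop_atTop.mpr fun b => ⟨b + c, fun N hN => by omega⟩
    have hDenComp : Tendsto (fun N : ℕ => jtpDen t ((r + N).toNat)) atTop (𝓝 D) :=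
      hDen_tendsto.comp htoNat
    -- numerator tendsto 1
    have hNum : Tendsto (fun N : ℕ => jtpNum t (2 * N) ((r + N).toNat)) atTop (𝓝 1) := by
      -- lower bound sequence
      have hφ : Tendsto (fun m : ℕ => ((m : ℝ) + 2 * c) * t ^ (m + 1)) atTop (𝓝 0) := by
        have hs1 : Summable (fun m : ℕ => ((m : ℝ)) * t ^ (m + 1)) := by
          have := summable_pow_mul_geometric_of_norm_lt_one (R := ℝ) 1 (r := t)
            (by rwa [Real.norm_eq_abs, abs_of_pos h0])
          simpa [pow_succ, pow_one, mul_comm, mul_assoc] using this.mul_right t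
        have hs2 : Summable (fun m : ℕ => (2 * (c : ℝ)) * t ^ (m + 1)) := by
          exact (((summable_geometric_of_lt_one h0.le h1).mul_left t).congr
            (fun n => by rw [pow_succ]; ring)).mul_left _
        have := (hs1.add hs2).tendsto_atTop_zero
        refine this.congr fun m => by ring
      have hLB : Tendsto (fun N : ℕ => 1 - ((N : ℝ) + c) * t ^ (N - c + 1)) atTop (𝓝 1) := by
        have hcomp : Tendsto (fun N : ℕ => ((N - c : ℕ) : ℝ) + 2 * c) atTop atTop := by
          apply tendsto_atTop_add_const_right
          exact tendsto_natCast_atTop_atTop.comp (tendsto_sub_atTop_nat c)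
        have h2 : Tendsto (fun N : ℕ => (((N - c : ℕ) : ℝ) + 2 * c) * t ^ ((N - c) + 1))
            atTop (𝓝 0) := hφ.comp (tendsto_sub_atTop_nat c)
        have h3 : Tendsto (fun N : ℕ => ((N : ℝ) + c) * t ^ (N - c + 1)) atTop (𝓝 0) := by
          refine h2.congr' ?_
          filter_upwards [eventually_ge_atTop c] with N hN
          congr 1
          push_cast [Nat.cast_sub hN]
          ring
        have := h3.const_sub 1
        simpa using this
      -- squeeze
      apply tendsto_of_tendsto_of_tendsto_of_le_of_le' hLB tendsto_const_nhds
      · -- lower bound eventually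
        filter_upwards [eventually_ge_atTop c] with N hN
        set k := (r + N).toNat with hk
        have hkle : k ≤ N + c := by omega
        have hsum_le : ∑ j ∈ range k, t ^ (4 * (2 * N - j)) ≤ ((N : ℝ) + c) * t ^ (N - c + 1) := by
          calc ∑ j ∈ range k, t ^ (4 * (2 * N - j)) ≤ ∑ j ∈ range k, t ^ (N - c + 1) := by
                apply Finset.sum_le_sum
                intro j hj
                have hj' : j < k := Finset.mem_range.mp hj
                exact pow_le_pow_of_le_one h0.le h1.le (by omega)
            _ = (k : ℝ) * t ^ (N - c + 1) := by
                rw [Finset.sum_const, card_range, nsmul_eq_mul]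
            _ ≤ ((N : ℝ) + c) * t ^ (N - c + 1) := by
                apply mul_le_mul_of_nonneg_right _ (by positivity)
                push_cast
                exact_mod_cast (by exact_mod_cast hkle : (k : ℝ) ≤ (N : ℝ) + c)
        have hprod_ge := jtp_prod_one_sub_ge (fun j => t ^ (4 * (2 * N - j)))
          (fun j => ⟨by positivity, jtp_pow_le_one h0 h1⟩) k
        have : jtpNum t (2 * N) k = ∏ j ∈ range k, (1 - t ^ (4 * (2 * N - j))) := rfl
        rw [this]
        linarith
      · -- upper bound
        filter_upwards with N
        exact jtpNum_le_one h0 h1 _ _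
    have hBtendsto : Tendsto (fun N : ℕ => jtpB t (2 * N) ((r + N).toNat)) atTop (𝓝 D⁻¹) := by
      have := hNum.mul (hDenComp.inv₀ hD_pos.ne')
      simpa [jtpB, div_eq_mul_inv] using this
    have hmain := hBtendsto.mul_const (t ^ (2 * r ^ 2 - r))
    refine hmain.congr' ?_
    filter_upwards [eventually_ge_atTop c] with N hN
    rw [hF_def]
    simp only [if_pos (show r.natAbs ≤ N from hN)]
  -- dominated convergence
  have hbound_summable : Summable (fun r : ℤ => D⁻¹ * t ^ (2 * r ^ 2 - r)) :=
    (jtp_summable_S h0 h1).mul_left _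
  have hdct := tendsto_tsum_of_dominated_convergence hbound_summable hab
    (Eventually.of_forall h_bound)
  -- tsum F N = finite product
  have hFsum : ∀ N : ℕ, (∑' r : ℤ, F N r) = ∏ j ∈ range (2 * N), (1 + t ^ (2 * j + 1)) := by
    intro N
    have hsupp : ∀ r : ℤ, r ∉ Finset.Icc (-(N:ℤ)) N → F N r = 0 := by
      intro r hr
      rw [hF_def]
      apply if_neg
      simp only [Finset.mem_Icc] at hr
      omega
    rw [tsum_eq_sum hsupp, jtp_finite h0 h1 N]
    apply Finset.sum_nbij' (i := fun r : ℤ => (r + N).toNat) (j := fun k : ℕ => (k : ℤ) - N)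
    · intro r hr
      simp only [Finset.mem_Icc] at hr
      simp only [Finset.mem_range]
      omega
    · intro k hk
      simp only [Finset.mem_range] at hk
      simp only [Finset.mem_Icc]
      omega
    · intro r hr
      simp only [Finset.mem_Icc] at hr
      omega
    · intro k hk
      simp only [Finset.mem_range] at hk
      omega
    · intro r hr
      simp only [Finset.mem_Icc] at hr
      rw [hF_def]
      simp only [if_pos (by omega : r.natAbs ≤ N)]
      have hcast : (((r + N).toNat : ℤ)) = r + N := Int.toNat_of_nonneg (by omega)
      rw [hcast]
      ring_nf
  -- product tendsto
  have hdouble : Tendsto (fun N : ℕ => 2 * N) atTop atTop :=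
    tendsto_atTop_atTop.mpr fun b => ⟨b, fun N hN => by omega⟩
  have hProd : Tendsto (fun N : ℕ => ∏ j ∈ range (2 * N), (1 + t ^ (2 * j + 1))) atTop (𝓝 Podd) :=
    (jtp_tendsto_prod h0 h1 hg_odd).comp hdouble
  have hlim1 : Tendsto (fun N : ℕ => ∑' r : ℤ, F N r) atTop (𝓝 Podd) := by
    refine hProd.congr fun N => (hFsum N).symm
  have heq : Podd = ∑' r : ℤ, D⁻¹ * t ^ (2 * r ^ 2 - r) := tendsto_nhds_unique hlim1 hdct
  rw [tsum_mul_left] at heq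
  have : D * Podd = D * (D⁻¹ * ∑' r : ℤ, t ^ (2 * r ^ 2 - r)) := by rw [← heq]
  rw [← mul_assoc, mul_inv_cancel₀ hD_pos.ne', one_mul] at this
  linarith [this]

end Main


/-- Jacobi triple product specialization: the theta function of the shifted lattice
satisfies `t^{2/24} · (Σ_{r∈ℤ} t^{2r² − r}) / ∏_{m≥1}(1−t^m) = (t^{1/24} ∏_{m≥1}(1+t^m))²`,
here stated for real `0 < t < 1` (tracking the fractional powers via `rpow`). -/
theorem stmt_13 (t : ℝ) (h0 : 0 < t) (h1 : t < 1) :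
    t ^ ((2 : ℝ)/24) * (∑' r : ℤ, t ^ (2 * r ^ 2 - r)) / ∏' m : ℕ, (1 - t ^ (m + 1))
      = (t ^ ((1 : ℝ)/24) * ∏' m : ℕ, (1 + t ^ (m + 1))) ^ 2 := by
  have hP1g : ∀ n : ℕ, |(1 - t ^ (n + 1)) - 1| ≤ t ^ (n + 1) :=
    jtp_hyp_minus h0 h1 (e := fun n => n + 1) (fun n => le_rfl)
  have hP1_pos : 0 < ∏' m : ℕ, (1 - t ^ (m + 1)) := jtp_tprod_pos h0 h1 hP1g
  have hSP : (∑' r : ℤ, t ^ (2 * r ^ 2 - r))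
      = (∏' m : ℕ, (1 - t ^ (m + 1))) * (∏' m : ℕ, (1 + t ^ (m + 1))) ^ 2 := by
    rw [jtp_S_eq h0 h1, ← jtp_rearrange h0 h1]
  have h24 : (t ^ ((1 : ℝ)/24)) ^ 2 = t ^ ((2 : ℝ)/24) := by
    rw [← Real.rpow_natCast (t ^ ((1 : ℝ)/24)) 2, ← Real.rpow_mul h0.le]
    norm_num
  rw [hSP, mul_pow, h24, mul_div_assoc, mul_comm (∏' m : ℕ, (1 - t ^ (m + 1))),
    mul_div_assoc, div_self hP1_pos.ne', mul_one]
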